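/- (Monotone argmax under single crossing) Suppose U : ℝ → Fin D → ℝ satisfies the single-crossing property in the natural ordering. Let K be a nonempty subset of Fin D, let ν₁ < ν₂ be real numbers, and suppose j₁, j₂ ∈ K satisfy U ν₁ j₁ > U ν₁ k for all k ∈ K with k ≠ j₁, and U ν₂ j₂ > U ν₂ k for all k ∈ K with k ≠ j₂. Then j₁ ≤ j₂. -/
import Mathlib

/-- Monotone argmax under single crossing: if utilities satisfy the single-crossing
property in the natural ordering, then the strict maximizer over any consideration set
`K` is nondecreasing in the preference parameter. -/
theorem monotone_argmax_single_crossing (D : ℕ) (U : ℝ → Fin D → ℝ)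
    (c : Fin D → Fin D → ℝ)
    (hSCP : ∀ j k : Fin D, j < k →
      (∀ ν, ν < c j k → U ν j > U ν k) ∧ U (c j k) j = U (c j k) k ∧
        (∀ ν, ν > c j k → U ν j < U ν k))
    (K : Finset (Fin D)) (hK : K.Nonempty) (ν₁ ν₂ : ℝ) (hν : ν₁ < ν₂)
    (j₁ j₂ : Fin D) (hj₁K : j₁ ∈ K) (hj₂K : j₂ ∈ K)
    (hmax₁ : ∀ k ∈ K, k ≠ j₁ → U ν₁ j₁ > U ν₁ k)
    (hmax₂ : ∀ k ∈ K, k ≠ j₂ → U ν₂ j₂ > U ν₂ k) :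
    j₁ ≤ j₂ := by
  by_contra h
  push_neg at h
  obtain ⟨h1, h2, h3⟩ := hSCP j₂ j₁ h
  have hne : j₂ ≠ j₁ := ne_of_lt h
  have hA := hmax₁ j₂ hj₂K hne
  have hB := hmax₂ j₁ hj₁K hne.symm
  have hc : c j₂ j₁ ≤ ν₁ := by
    by_contra hc
    push_neg at hc
    exact absurd (h1 ν₁ hc) (not_lt.mpr hA.le)
  exact absurd (h3 ν₂ (lt_of_le_of_lt hc hν)) (not_lt.mpr hB.le)
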